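/- Let g be a C¹ function on [0,1] with g(0) = 0. Then ∫₀¹ |g(r)|² dr ≤ (1/2) ∫₀¹ |g'(r)|² (1 − r²) dr. -/

import Mathlib

open MeasureTheory Set

/-- Hardy–Littlewood–Pólya type inequality: for a C¹ function `g` on `[0,1]`
with `g(0) = 0`, `∫₀¹ |g(r)|² dr ≤ (1/2) ∫₀¹ |g'(r)|² (1 − r²) dr`. -/
theorem stmt3 (g : ℝ → ℂ) (hg : ContDiffOn ℝ 1 g (Icc (0:ℝ) 1)) (h0 : g 0 = 0) :
    (∫⁻ r in Ioo (0:ℝ) 1, ENNReal.ofReal (‖g r‖ ^ 2)) ≤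
      (1 / 2 : ENNReal) *
        ∫⁻ r in Ioo (0:ℝ) 1,
          ENNReal.ofReal (‖derivWithin g (Icc (0:ℝ) 1) r‖ ^ 2 * (1 - r ^ 2)) := by
  set φ : ℝ → ENNReal := fun t => ENNReal.ofReal (‖deriv g t‖ ^ 2) with hφdef
  have hmder : Measurable (deriv g) := measurable_deriv g
  have hmφ : Measurable φ := (hmder.norm.pow_const 2).ennreal_ofReal
  have hdiff : ∀ t ∈ Ioo (0:ℝ) 1, HasDerivAt g (deriv g t) t := by
    intro t ht
    exact ((hg.differentiableOn one_ne_zero t (Ioo_subset_Icc_self ht)).differentiableAt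
      (Icc_mem_nhds ht.1 ht.2)).hasDerivAt
  have hderiv_eq : ∀ t ∈ Ioo (0:ℝ) 1, derivWithin g (Icc (0:ℝ) 1) t = deriv g t := by
    intro t ht
    exact derivWithin_of_mem_nhds (Icc_mem_nhds ht.1 ht.2)
  have hcontW : ContinuousOn (derivWithin g (Icc (0:ℝ) 1)) (Icc (0:ℝ) 1) :=
    hg.continuousOn_derivWithin (uniqueDiffOn_Icc one_pos) le_rfl
  -- integrability of `deriv g` on `Ioc 0 r`
  have hintOn : ∀ r ∈ Ioo (0:ℝ) 1, IntegrableOn (deriv g) (Ioc 0 r) volume := by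
    intro r hr
    have h1 : IntegrableOn (derivWithin g (Icc (0:ℝ) 1)) (Ioc 0 r) volume := by
      have h2 : IntegrableOn (derivWithin g (Icc (0:ℝ) 1)) (Icc (0:ℝ) 1) volume :=
        hcontW.integrableOn_Icc
      exact h2.mono_set (Ioc_subset_Icc_self.trans (Icc_subset_Icc le_rfl hr.2.le))
    have hae : (derivWithin g (Icc (0:ℝ) 1)) =ᵐ[volume.restrict (Ioc 0 r)] deriv g := by
      rw [← Measure.restrict_congr_set (Ioo_ae_eq_Ioc)]
      exact (ae_restrict_iff' measurableSet_Ioo).2 (ae_of_all _ fun t ht =>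
        hderiv_eq t ⟨ht.1, ht.2.trans hr.2⟩)
    exact h1.congr hae
  -- FTC
  have hftc : ∀ r ∈ Ioo (0:ℝ) 1, g r = ∫ t in Ioo (0:ℝ) r, deriv g t := by
    intro r hr
    have hint : IntervalIntegrable (deriv g) volume 0 r :=
      (intervalIntegrable_iff_integrableOn_Ioc_of_le hr.1.le).2 (hintOn r hr)
    have h := intervalIntegral.integral_eq_sub_of_hasDeriv_right_of_le hr.1.le
      (hg.continuousOn.mono (Icc_subset_Icc le_rfl hr.2.le))
      (fun x hx => (hdiff x ⟨hx.1, hx.2.trans hr.2⟩).hasDerivWithinAt)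
      hint
    rw [h0, sub_zero] at h
    rw [← h, intervalIntegral.integral_of_le hr.1.le, integral_Ioc_eq_integral_Ioo]
  -- pointwise Cauchy–Schwarz bound
  have hpt : ∀ r ∈ Ioo (0:ℝ) 1,
      ENNReal.ofReal (‖g r‖ ^ 2) ≤ ENNReal.ofReal r * ∫⁻ t in Ioo (0:ℝ) r, φ t := by
    intro r hr
    have h1 : ENNReal.ofReal ‖g r‖ ≤ ∫⁻ t in Ioo (0:ℝ) r, ENNReal.ofReal ‖deriv g t‖ := by
      rw [hftc r hr]
      calc ENNReal.ofReal ‖∫ t in Ioo (0:ℝ) r, deriv g t‖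
          ≤ ENNReal.ofReal ((∫⁻ t in Ioo (0:ℝ) r, ENNReal.ofReal ‖deriv g t‖).toReal) :=
            ENNReal.ofReal_le_ofReal (norm_integral_le_lintegral_norm _)
        _ ≤ _ := ENNReal.ofReal_toReal_le
    have h2 : (∫⁻ t in Ioo (0:ℝ) r, ENNReal.ofReal ‖deriv g t‖)
        ≤ (∫⁻ t in Ioo (0:ℝ) r, φ t) ^ ((1:ℝ)/2) * (ENNReal.ofReal r) ^ ((1:ℝ)/2) := by
      have hpq : Real.HolderConjugate 2 2 := ⟨by norm_num, by norm_num, by norm_num⟩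
      have hH := ENNReal.lintegral_mul_le_Lp_mul_Lq (volume.restrict (Ioo (0:ℝ) r)) hpq
        (f := fun t => ENNReal.ofReal ‖deriv g t‖) (g := fun _ => 1)
        (hmder.norm.ennreal_ofReal.aemeasurable) aemeasurable_const
      simp only [Pi.mul_apply, mul_one, ENNReal.one_rpow] at hH
      have hvol : (∫⁻ _ in Ioo (0:ℝ) r, (1:ENNReal)) = ENNReal.ofReal r := by
        simp [Real.volume_Ioo]
      have hsq : ∀ t, (ENNReal.ofReal ‖deriv g t‖) ^ (2:ℝ) = φ t := by
        intro t
        rw [ENNReal.ofReal_rpow_of_nonneg (norm_nonneg _) (by norm_num)]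
        rw [show ((2:ℝ)) = ((2:ℕ):ℝ) by norm_num, Real.rpow_natCast]
      simp only [hsq, hvol] at hH
      exact hH
    calc ENNReal.ofReal (‖g r‖ ^ 2)
        = (ENNReal.ofReal ‖g r‖) ^ 2 := ENNReal.ofReal_pow (norm_nonneg _) 2
      _ ≤ ((∫⁻ t in Ioo (0:ℝ) r, φ t) ^ ((1:ℝ)/2) * (ENNReal.ofReal r) ^ ((1:ℝ)/2)) ^ 2 :=
          pow_le_pow_left₀ zero_le (h1.trans h2) 2
      _ = (∫⁻ t in Ioo (0:ℝ) r, φ t) * ENNReal.ofReal r := by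
          rw [mul_pow, ← ENNReal.rpow_natCast ((∫⁻ t in Ioo (0:ℝ) r, φ t) ^ ((1:ℝ)/2)) 2,
            ← ENNReal.rpow_natCast ((ENNReal.ofReal r) ^ ((1:ℝ)/2)) 2,
            ← ENNReal.rpow_mul, ← ENNReal.rpow_mul]
          norm_num
      _ = ENNReal.ofReal r * ∫⁻ t in Ioo (0:ℝ) r, φ t := mul_comm _ _
  -- double-integral setup
  set S : Set (ℝ × ℝ) := {p : ℝ × ℝ | 0 < p.2 ∧ p.2 < p.1} with hSdef
  have hS : MeasurableSet S :=
    (measurableSet_lt measurable_const measurable_snd).inter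
      (measurableSet_lt measurable_snd measurable_fst)
  set F : ℝ × ℝ → ENNReal := S.indicator (fun p => ENNReal.ofReal p.1 * φ p.2) with hFdef
  have hF : Measurable F :=
    ((ENNReal.measurable_ofReal.comp measurable_fst).mul (hmφ.comp measurable_snd)).indicator hS
  have hmemS : ∀ r t : ℝ, (r, t) ∈ S ↔ 0 < t ∧ t < r := fun r t => Iff.rfl
  -- inner integral identity for fixed r
  have hrfix : ∀ r ∈ Ioo (0:ℝ) 1,
      ENNReal.ofReal r * ∫⁻ t in Ioo (0:ℝ) r, φ t = ∫⁻ t in Ioo (0:ℝ) 1, F (r, t) := by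
    intro r hr
    have heq : ∀ t, F (r, t) = (Ioo (0:ℝ) r).indicator (fun t => ENNReal.ofReal r * φ t) t := by
      intro t
      by_cases h : t ∈ Ioo (0:ℝ) r
      · rw [Set.indicator_of_mem h, hFdef, Set.indicator_of_mem ((hmemS r t).2 ⟨h.1, h.2⟩)]
      · rw [Set.indicator_of_notMem h, hFdef, Set.indicator_of_notMem]
        intro hc
        exact h ⟨((hmemS r t).1 hc).1, ((hmemS r t).1 hc).2⟩
    rw [show (fun t => F (r, t)) = fun t => (Ioo (0:ℝ) r).indicator
        (fun t => ENNReal.ofReal r * φ t) t from funext heq]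
    rw [lintegral_indicator measurableSet_Ioo, Measure.restrict_restrict measurableSet_Ioo,
      inter_eq_left.2 (Ioo_subset_Ioo le_rfl hr.2.le),
      lintegral_const_mul' _ _ ENNReal.ofReal_ne_top]
  -- inner integral identity for fixed t
  have htfix : ∀ t ∈ Ioo (0:ℝ) 1,
      (∫⁻ r in Ioo (0:ℝ) 1, F (r, t)) = φ t * ENNReal.ofReal ((1 - t ^ 2) / 2) := by
    intro t ht
    have heq : ∀ r, F (r, t) = (Ioi t).indicator (fun r => ENNReal.ofReal r * φ t) r := by
      intro r
      by_cases h : t < r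
      · rw [hFdef, Set.indicator_of_mem ((hmemS r t).2 ⟨ht.1, h⟩),
          Set.indicator_of_mem (mem_Ioi.mpr h)]
      · rw [hFdef, Set.indicator_of_notMem (fun hc => h (mem_Ioi.mp hc)),
          Set.indicator_of_notMem (fun hc => h ((hmemS r t).1 hc).2)]
    have hIoo : (∫⁻ r in Ioo t 1, ENNReal.ofReal r) = ENNReal.ofReal ((1 - t ^ 2) / 2) := by
      have hint : IntegrableOn (fun r : ℝ => r) (Ioo t 1) volume :=
        continuous_id.integrableOn_Icc.mono_set Ioo_subset_Icc_self
      have hnn : 0 ≤ᵐ[volume.restrict (Ioo t 1)] fun r : ℝ => r :=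
        (ae_restrict_iff' measurableSet_Ioo).2 (ae_of_all _ fun r hr => (ht.1.trans hr.1).le)
      rw [← ofReal_integral_eq_lintegral_ofReal hint hnn]
      congr 1
      rw [← integral_Ioc_eq_integral_Ioo, ← intervalIntegral.integral_of_le ht.2.le, integral_id]
      norm_num
    have hinter : Ioi t ∩ Ioo (0:ℝ) 1 = Ioo t 1 := by
      ext x
      simp only [mem_inter_iff, mem_Ioi, mem_Ioo]
      constructor
      · rintro ⟨h1, _, h3⟩; exact ⟨h1, h3⟩
      · rintro ⟨h1, h2⟩; exact ⟨h1, ht.1.trans h1, h2⟩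
    calc (∫⁻ r in Ioo (0:ℝ) 1, F (r, t))
        = ∫⁻ r in Ioo (0:ℝ) 1, (Ioi t).indicator (fun r => ENNReal.ofReal r * φ t) r :=
          lintegral_congr fun r => heq r
      _ = ∫⁻ r in Ioi t ∩ Ioo (0:ℝ) 1, ENNReal.ofReal r * φ t := by
          rw [lintegral_indicator measurableSet_Ioi, Measure.restrict_restrict measurableSet_Ioi]
      _ = ∫⁻ r in Ioo t 1, ENNReal.ofReal r * φ t := by rw [hinter]
      _ = (∫⁻ r in Ioo t 1, ENNReal.ofReal r) * φ t :=
          lintegral_mul_const _ ENNReal.measurable_ofReal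
      _ = φ t * ENNReal.ofReal ((1 - t ^ 2) / 2) := by rw [hIoo, mul_comm]
  -- put it together
  calc (∫⁻ r in Ioo (0:ℝ) 1, ENNReal.ofReal (‖g r‖ ^ 2))
      ≤ ∫⁻ r in Ioo (0:ℝ) 1, ENNReal.ofReal r * ∫⁻ t in Ioo (0:ℝ) r, φ t :=
        lintegral_mono_ae ((ae_restrict_iff' measurableSet_Ioo).2 (ae_of_all _ hpt))
    _ = ∫⁻ r in Ioo (0:ℝ) 1, ∫⁻ t in Ioo (0:ℝ) 1, F (r, t) :=
        lintegral_congr_ae ((ae_restrict_iff' measurableSet_Ioo).2 (ae_of_all _ hrfix))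
    _ = ∫⁻ t in Ioo (0:ℝ) 1, ∫⁻ r in Ioo (0:ℝ) 1, F (r, t) :=
        lintegral_lintegral_swap (f := fun r t => F (r, t)) hF.aemeasurable
    _ = ∫⁻ t in Ioo (0:ℝ) 1, φ t * ENNReal.ofReal ((1 - t ^ 2) / 2) :=
        lintegral_congr_ae ((ae_restrict_iff' measurableSet_Ioo).2 (ae_of_all _ htfix))
    _ = (1 / 2 : ENNReal) *
        ∫⁻ r in Ioo (0:ℝ) 1,
          ENNReal.ofReal (‖derivWithin g (Icc (0:ℝ) 1) r‖ ^ 2 * (1 - r ^ 2)) := by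
        rw [← lintegral_const_mul' _ _ (by norm_num : (1/2 : ENNReal) ≠ ⊤)]
        refine lintegral_congr_ae ((ae_restrict_iff' measurableSet_Ioo).2 (ae_of_all _ ?_))
        intro t ht
        show φ t * ENNReal.ofReal ((1 - t ^ 2) / 2) =
          1 / 2 * ENNReal.ofReal (‖derivWithin g (Icc (0:ℝ) 1) t‖ ^ 2 * (1 - t ^ 2))
        rw [hderiv_eq t ht]
        simp only [hφdef]
        rw [← ENNReal.ofReal_mul (by positivity : (0:ℝ) ≤ ‖deriv g t‖ ^ 2)]
        rw [show (1/2 : ENNReal) = ENNReal.ofReal (1/2) by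
          rw [ENNReal.ofReal_div_of_pos (by norm_num), ENNReal.ofReal_one,
            ENNReal.ofReal_ofNat]]
        rw [← ENNReal.ofReal_mul (by norm_num : (0:ℝ) ≤ 1/2)]
        congr 1
        ring
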